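/- Suppose each agent i has linear utility U_i(x) = ∑_j u_{ij} x_j with u_i ∈ ℝ^k_{≥0}, u_i ≠ 0, and x* ∈ ℝ^k_{≥0} with ∑_j x*_j ≤ B maximizes ∑_i log U_i(x) over the simplex {x ≥ 0, ∑_j x_j ≤ B}. If x* satisfies the first-order conditions ∑_i u_{ij}/U_i(x*) ≤ n/B for all j with equality when x*_j > 0, then x* lies in the core: there is no subset S of agents and allocation y ≥ 0 with ∑_j y_j ≤ (|S|/n)·B such that U_i(y) > U_i(x*) for every i ∈ S. -/

import Mathlib

/-- For linear utilities, a maximizer of `∑_i log U_i` over the budget simplex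
satisfying the first-order conditions lies in the core. -/
theorem stmt3 (n k : ℕ) (B : ℝ) (hB : 0 < B) (hn : 0 < n)
    (u : Fin n → Fin k → ℝ) (hu : ∀ i j, 0 ≤ u i j) (hu0 : ∀ i, u i ≠ 0)
    (x : Fin k → ℝ) (hx : ∀ j, 0 ≤ x j) (hxB : ∑ j, x j ≤ B)
    (hpos : ∀ i, 0 < ∑ j, u i j * x j)
    (hmax : ∀ y : Fin k → ℝ, (∀ j, 0 ≤ y j) → ∑ j, y j ≤ B →
      ∑ i, Real.log (∑ j, u i j * y j) ≤ ∑ i, Real.log (∑ j, u i j * x j))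
    (hfoc : ∀ j, ∑ i, u i j / (∑ m, u i m * x m) ≤ (n : ℝ) / B)
    (hfoc' : ∀ j, 0 < x j → ∑ i, u i j / (∑ m, u i m * x m) = (n : ℝ) / B) :
    ¬ ∃ S : Finset (Fin n), S.Nonempty ∧ ∃ y : Fin k → ℝ,
      (∀ j, 0 ≤ y j) ∧ ∑ j, y j ≤ ((S.card : ℝ) / n) * B ∧
      ∀ i ∈ S, (∑ j, u i j * x j) < ∑ j, u i j * y j := by
  rintro ⟨S, hS, y, hy, hyB, hblock⟩
  -- ratio sum is strictly greater than |S|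
  have h1 : (S.card : ℝ) < ∑ i ∈ S, (∑ j, u i j * y j) / (∑ j, u i j * x j) := by
    calc (S.card : ℝ) = ∑ _i ∈ S, (1 : ℝ) := by simp
    _ < ∑ i ∈ S, (∑ j, u i j * y j) / (∑ j, u i j * x j) := by
        apply Finset.sum_lt_sum_of_nonempty hS
        intro i hi
        rw [lt_div_iff₀ (hpos i), one_mul]
        exact hblock i hi
  -- swap the double sum
  have h2 : ∑ i ∈ S, (∑ j, u i j * y j) / (∑ j, u i j * x j)
      = ∑ j, y j * ∑ i ∈ S, u i j / (∑ m, u i m * x m) := by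
    have he : ∀ i ∈ S, (∑ j, u i j * y j) / (∑ j, u i j * x j)
        = ∑ j, y j * (u i j / (∑ m, u i m * x m)) := by
      intro i _
      rw [Finset.sum_div]
      apply Finset.sum_congr rfl
      intro j _
      field_simp
    rw [Finset.sum_congr rfl he, Finset.sum_comm]
    simp [Finset.mul_sum]
  -- bound each inner sum
  have h3 : ∑ j, y j * ∑ i ∈ S, u i j / (∑ m, u i m * x m)
      ≤ ∑ j, y j * ((n : ℝ) / B) := by
    apply Finset.sum_le_sum
    intro j _
    apply mul_le_mul_of_nonneg_left _ (hy j)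
    calc ∑ i ∈ S, u i j / (∑ m, u i m * x m)
        ≤ ∑ i, u i j / (∑ m, u i m * x m) := by
          apply Finset.sum_le_sum_of_subset_of_nonneg (Finset.subset_univ S)
          intro i _ _
          exact div_nonneg (hu i j) (hpos i).le
      _ ≤ (n : ℝ) / B := hfoc j
  have h4 : ∑ j, y j * ((n : ℝ) / B) ≤ (S.card : ℝ) := by
    rw [← Finset.sum_mul]
    have hn' : (0 : ℝ) < n := Nat.cast_pos.mpr hn
    calc (∑ j, y j) * ((n : ℝ) / B) ≤ ((S.card : ℝ) / n * B) * ((n : ℝ) / B) := by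
          apply mul_le_mul_of_nonneg_right hyB
          positivity
      _ = (S.card : ℝ) := by field_simp
  linarith [h2 ▸ h1, h3, h4]
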